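/- Let g(y) = 1/(π √(y(1 − y))) for y ∈ (0, 1) be the invariant density of the logistic map at fully developed chaos. Then ∫_0^{1/4} g(y) dy = 1/3, ∫_{1/4}^{(5−√5)/8} g(y) dy = 1/15, ∫_{(5−√5)/8}^{3/4} g(y) dy = 4/15, ∫_{3/4}^{(5+√5)/8} g(y) dy = 2/15, and ∫_{(5+√5)/8}^{1} g(y) dy = 1/5. Consequently, the ordinal probabilities of the embedding-dimension-3 permutation patterns of the logistic map y_{k+1} = 4 y_k (1 − y_k) are (1/3, 1/15, 4/15, 2/15, 1/5, 0). -/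

import Mathlib

open Real MeasureTheory

/-- The logistic map at fully developed chaos. -/
noncomputable def logisticMap (y : ℝ) : ℝ := 4 * y * (1 - y)

/-- The invariant density of the logistic map at fully developed chaos. -/
noncomputable def logisticDensity (y : ℝ) : ℝ := 1 / (Real.pi * Real.sqrt (y * (1 - y)))

lemma logisticDensity_integrableOn : IntegrableOn logisticDensity (Set.Ioc 0 1) := by
  have hrpow : IntervalIntegrable (fun x : ℝ => x ^ (-(1:ℝ)/2)) volume 0 1 :=
    intervalIntegral.intervalIntegrable_rpow' (by norm_num)
  have hrpow2 : IntervalIntegrable (fun x : ℝ => (1 - x) ^ (-(1:ℝ)/2)) volume 0 1 := by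
    simpa using (hrpow.comp_sub_left 1).symm
  have hg : IntervalIntegrable
      (fun y : ℝ => Real.sqrt 2 / Real.pi * (y ^ (-(1:ℝ)/2) + (1 - y) ^ (-(1:ℝ)/2)))
      volume 0 1 := ((hrpow.add hrpow2).const_mul _)
  have hgOn : IntegrableOn
      (fun y : ℝ => Real.sqrt 2 / Real.pi * (y ^ (-(1:ℝ)/2) + (1 - y) ^ (-(1:ℝ)/2)))
      (Set.Ioc 0 1) := by
    have := intervalIntegrable_iff.mp hg
    simpa [Set.uIoc_of_le (by norm_num : (0:ℝ) ≤ 1)] using this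
  have hmeas : Measurable logisticDensity := by
    unfold logisticDensity
    fun_prop
  refine Integrable.mono hgOn hmeas.aestronglyMeasurable.restrict ?_
  filter_upwards [ae_restrict_mem measurableSet_Ioc] with y hy
  rcases eq_or_lt_of_le hy.2 with h1 | h1
  · have : logisticDensity y = 0 := by
      unfold logisticDensity
      rw [h1]
      norm_num
    rw [this]
    simp only [norm_zero, Real.norm_eq_abs]
    positivity
  · have hy0 : 0 < y := hy.1
    have hy1 : 0 < 1 - y := by linarith
    set sy := Real.sqrt y with hsy
    set sz := Real.sqrt (1 - y) with hsz
    have hsy0 : 0 < sy := Real.sqrt_pos.mpr hy0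
    have hsz0 : 0 < sz := Real.sqrt_pos.mpr hy1
    have hsy2 : sy ^ 2 = y := Real.sq_sqrt hy0.le
    have hsz2 : sz ^ 2 = 1 - y := Real.sq_sqrt hy1.le
    have h2 : Real.sqrt 2 ^ 2 = 2 := Real.sq_sqrt (by norm_num)
    have h2p : (0:ℝ) < Real.sqrt 2 := Real.sqrt_pos.mpr (by norm_num)
    have hpi : (0:ℝ) < Real.pi := Real.pi_pos
    have hprod : Real.sqrt (y * (1 - y)) = sy * sz := Real.sqrt_mul hy0.le _
    have hyr : y ^ (-(1:ℝ)/2) = 1 / sy := by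
      rw [hsy, Real.sqrt_eq_rpow, show (-(1:ℝ)/2) = -(1/2) by norm_num,
        Real.rpow_neg hy0.le]
      exact (one_div _).symm
    have hzr : (1 - y) ^ (-(1:ℝ)/2) = 1 / sz := by
      rw [hsz, Real.sqrt_eq_rpow, show (-(1:ℝ)/2) = -(1/2) by norm_num,
        Real.rpow_neg hy1.le]
      exact (one_div _).symm
    have hd : logisticDensity y = 1 / (Real.pi * (sy * sz)) := by
      unfold logisticDensity
      rw [hprod]
    rw [Real.norm_eq_abs, Real.norm_eq_abs, hd, hyr, hzr]
    have hlhs : (0:ℝ) < 1 / (Real.pi * (sy * sz)) := by positivity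
    have hrhs : (0:ℝ) ≤ Real.sqrt 2 / Real.pi * (1 / sy + 1 / sz) := by positivity
    rw [abs_of_pos hlhs, abs_of_nonneg hrhs]
    have hkey : 1 ≤ Real.sqrt 2 * (sy + sz) := by
      nlinarith [sq_nonneg (sy - sz), sq_nonneg (sy + sz - 1), mul_pos hsy0 hsz0]
    rw [div_le_iff₀ (by positivity)]
    have expand : Real.sqrt 2 / Real.pi * (1 / sy + 1 / sz) * (Real.pi * (sy * sz))
        = Real.sqrt 2 * (sy + sz) := by
      field_simp
      ring
    rw [expand]
    exact hkey

lemma logisticDensity_intervalIntegrable {a b : ℝ} (ha : 0 ≤ a) (hb : b ≤ 1) (hab : a ≤ b) :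
    IntervalIntegrable logisticDensity volume a b := by
  rw [intervalIntegrable_iff, Set.uIoc_of_le hab]
  exact logisticDensity_integrableOn.mono_set (Set.Ioc_subset_Ioc ha hb)

lemma integral_logisticDensity {a b : ℝ} (ha : 0 ≤ a) (hb : b ≤ 1) (hab : a ≤ b) :
    ∫ y in a..b, logisticDensity y
      = (Real.arcsin (2*b-1) - Real.arcsin (2*a-1)) / Real.pi := by
  have hpi : (0:ℝ) < Real.pi := Real.pi_pos
  have hF : ∀ y ∈ Set.Ioo a b, HasDerivAt (fun y => Real.arcsin (2*y-1) / Real.pi)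
      (logisticDensity y) y := by
    intro y hy
    have hy0 : 0 < y := lt_of_le_of_lt ha hy.1
    have hy1 : y < 1 := lt_of_lt_of_le hy.2 hb
    have h₁ : (2*y-1 : ℝ) ≠ -1 := by intro h; nlinarith
    have h₂ : (2*y-1 : ℝ) ≠ 1 := by intro h; nlinarith
    have hinner : HasDerivAt (fun y : ℝ => 2*y-1) 2 y := by
      simpa using ((hasDerivAt_id y).const_mul 2).sub_const 1
    have := ((Real.hasDerivAt_arcsin h₁ h₂).comp y hinner).div_const Real.pi
    refine this.congr_deriv ?_
    symm
    unfold logisticDensity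
    have he : 1 - (2*y-1)^2 = 4 * (y * (1-y)) := by ring
    rw [he, Real.sqrt_mul (by norm_num : (0:ℝ) ≤ 4)]
    have h4 : Real.sqrt 4 = 2 := by
      rw [show (4:ℝ) = 2^2 by norm_num, Real.sqrt_sq (by norm_num : (0:ℝ) ≤ 2)]
    rw [h4]
    have hs : 0 < Real.sqrt (y * (1-y)) := Real.sqrt_pos.mpr (by nlinarith)
    field_simp
  have hcont : ContinuousOn (fun y => Real.arcsin (2*y-1) / Real.pi) (Set.Icc a b) :=
    (Real.continuous_arcsin.comp (by continuity)).continuousOn.div_const _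
  have := intervalIntegral.integral_eq_sub_of_hasDerivAt_of_le hab hcont hF
    (logisticDensity_intervalIntegrable ha hb hab)
  rw [this]
  ring

lemma sqrt5_lt : Real.sqrt 5 < 3 := by
  nlinarith [Real.sq_sqrt (by norm_num : (0:ℝ) ≤ 5), Real.sqrt_nonneg 5]

lemma sqrt5_gt : 2 < Real.sqrt 5 := by
  nlinarith [Real.sq_sqrt (by norm_num : (0:ℝ) ≤ 5), Real.sqrt_nonneg 5]

lemma arcsin_half : Real.arcsin (1/2) = Real.pi/6 := by
  rw [← Real.sin_pi_div_six]
  exact Real.arcsin_sin (by linarith [Real.pi_pos]) (by linarith [Real.pi_pos])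

lemma sin_pi_div_ten : Real.sin (Real.pi/10) = (Real.sqrt 5 - 1)/4 := by
  have h : Real.pi/10 = Real.pi/2 - 2*(Real.pi/5) := by ring
  rw [h, Real.sin_pi_div_two_sub, Real.cos_two_mul, Real.cos_pi_div_five]
  have h5 : Real.sqrt 5 ^ 2 = 5 := Real.sq_sqrt (by norm_num)
  nlinarith [h5]

lemma sin_three_pi_div_ten : Real.sin (3*Real.pi/10) = (1 + Real.sqrt 5)/4 := by
  have h : 3*Real.pi/10 = Real.pi/2 - Real.pi/5 := by ring
  rw [h, Real.sin_pi_div_two_sub, Real.cos_pi_div_five]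

lemma arcsin_m : Real.arcsin ((1 - Real.sqrt 5)/4) = -(Real.pi/10) := by
  have : (1 - Real.sqrt 5)/4 = -((Real.sqrt 5 - 1)/4) := by ring
  rw [this, Real.arcsin_neg, ← sin_pi_div_ten]
  rw [Real.arcsin_sin (by linarith [Real.pi_pos]) (by linarith [Real.pi_pos])]

lemma arcsin_p : Real.arcsin ((1 + Real.sqrt 5)/4) = 3*Real.pi/10 := by
  rw [← sin_three_pi_div_ten]
  exact Real.arcsin_sin (by linarith [Real.pi_pos]) (by linarith [Real.pi_pos])

lemma int1 : (∫ y in (0 : ℝ)..(1 / 4), logisticDensity y) = 1 / 3 := by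
  rw [integral_logisticDensity (by norm_num) (by norm_num) (by norm_num)]
  rw [show (2*(1/4:ℝ)-1) = -(1/2) by norm_num, show (2*(0:ℝ)-1) = -1 by norm_num,
    Real.arcsin_neg, Real.arcsin_neg_one, arcsin_half]
  field_simp [Real.pi_ne_zero]
  ring

lemma int2 : (∫ y in (1 / 4 : ℝ)..((5 - Real.sqrt 5) / 8), logisticDensity y) = 1 / 15 := by
  have h3 := sqrt5_lt
  have h2 := sqrt5_gt
  rw [integral_logisticDensity (by norm_num) (by linarith) (by linarith)]
  rw [show (2*((5 - Real.sqrt 5)/8:ℝ)-1) = (1 - Real.sqrt 5)/4 by ring,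
    show (2*(1/4:ℝ)-1) = -(1/2) by norm_num, Real.arcsin_neg, arcsin_half, arcsin_m]
  field_simp [Real.pi_ne_zero]
  ring

lemma int3 : (∫ y in ((5 - Real.sqrt 5) / 8 : ℝ)..(3 / 4), logisticDensity y) = 4 / 15 := by
  have h3 := sqrt5_lt
  have h2 := sqrt5_gt
  rw [integral_logisticDensity (by linarith) (by norm_num) (by linarith)]
  rw [show (2*((5 - Real.sqrt 5)/8:ℝ)-1) = (1 - Real.sqrt 5)/4 by ring,
    show (2*(3/4:ℝ)-1) = 1/2 by norm_num, arcsin_half, arcsin_m]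
  field_simp [Real.pi_ne_zero]
  ring

lemma int4 : (∫ y in (3 / 4 : ℝ)..((5 + Real.sqrt 5) / 8), logisticDensity y) = 2 / 15 := by
  have h3 := sqrt5_lt
  have h2 := sqrt5_gt
  rw [integral_logisticDensity (by norm_num) (by linarith) (by linarith)]
  rw [show (2*((5 + Real.sqrt 5)/8:ℝ)-1) = (1 + Real.sqrt 5)/4 by ring,
    show (2*(3/4:ℝ)-1) = 1/2 by norm_num, arcsin_half, arcsin_p]
  field_simp [Real.pi_ne_zero]
  ring

lemma int5 : (∫ y in ((5 + Real.sqrt 5) / 8 : ℝ)..1, logisticDensity y) = 1 / 5 := by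
  have h3 := sqrt5_lt
  have h2 := sqrt5_gt
  rw [integral_logisticDensity (by linarith) (by norm_num) (by linarith)]
  rw [show (2*((5 + Real.sqrt 5)/8:ℝ)-1) = (1 + Real.sqrt 5)/4 by ring,
    show (2*(1:ℝ)-1) = 1 by norm_num, Real.arcsin_one, arcsin_p]
  field_simp [Real.pi_ne_zero]
  ring

lemma set1 : {y ∈ Set.Ioo (0 : ℝ) 1 |
    y < logisticMap y ∧ logisticMap y < logisticMap (logisticMap y)} = Set.Ioo 0 (1/4) := by
  ext y
  simp only [Set.mem_setOf_eq, Set.mem_Ioo, logisticMap]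
  constructor
  · rintro ⟨⟨h0, h1⟩, ha, hb⟩
    refine ⟨h0, ?_⟩
    have hy34 : y < 3/4 := by nlinarith
    have hu0 : 0 < 4*y*(1-y) := by nlinarith
    have hu34 : 4*y*(1-y) < 3/4 := by nlinarith
    nlinarith
  · rintro ⟨h0, h1⟩
    have hy1 : y < 1 := by linarith
    refine ⟨⟨h0, hy1⟩, by nlinarith, ?_⟩
    have hu0 : 0 < 4*y*(1-y) := by nlinarith
    have hu34 : 4*y*(1-y) < 3/4 := by nlinarith
    nlinarith [mul_pos hu0 (by linarith : (0:ℝ) < 3 - 4*(4*y*(1-y)))]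

lemma set2 : {y ∈ Set.Ioo (0 : ℝ) 1 |
    y < logisticMap (logisticMap y) ∧ logisticMap (logisticMap y) < logisticMap y}
    = Set.Ioo (1/4) ((5 - Real.sqrt 5)/8) := by
  have h5 : Real.sqrt 5 ^ 2 = 5 := Real.sq_sqrt (by norm_num)
  have h3 := sqrt5_lt
  have h2 := sqrt5_gt
  ext y
  simp only [Set.mem_setOf_eq, Set.mem_Ioo, logisticMap]
  constructor
  · rintro ⟨⟨h0, h1⟩, ha, hb⟩
    -- from hb : f f y < f y with f y > 0, get f y > 3/4, hence 1/4 < y < 3/4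
    have hu0 : 0 < 4*y*(1-y) := by nlinarith
    have hfy : 4*y*(1-y) > 3/4 := by nlinarith
    have hy14 : 1/4 < y := by nlinarith
    have hy34 : y < 3/4 := by nlinarith
    -- from ha : y < f f y get quadratic positive
    have hq : 16*y^2 - 20*y + 5 > 0 := by nlinarith
    refine ⟨hy14, ?_⟩
    nlinarith [sq_nonneg (8*y - 5 + Real.sqrt 5)]
  · rintro ⟨h0, h1⟩
    have hy34 : y < 3/4 := by nlinarith
    have h0' : 0 < y := by linarith
    have h1' : y < 1 := by linarith
    have hq : 16*y^2 - 20*y + 5 > 0 := by nlinarith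
    have hfy : 4*y*(1-y) > 3/4 := by nlinarith
    refine ⟨⟨h0', h1'⟩, ?_, ?_⟩
    · nlinarith [mul_pos (mul_pos h0' (by linarith : (0:ℝ) < 3 - 4*y)) hq]
    · nlinarith

lemma set3 : {y ∈ Set.Ioo (0 : ℝ) 1 |
    logisticMap (logisticMap y) < y ∧ y < logisticMap y}
    = Set.Ioo ((5 - Real.sqrt 5)/8) (3/4) := by
  have h5 : Real.sqrt 5 ^ 2 = 5 := Real.sq_sqrt (by norm_num)
  have h3 := sqrt5_lt
  have h2 := sqrt5_gt
  ext y
  simp only [Set.mem_setOf_eq, Set.mem_Ioo, logisticMap]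
  constructor
  · rintro ⟨⟨h0, h1⟩, ha, hb⟩
    have hy34 : y < 3/4 := by nlinarith
    have hq : 16*y^2 - 20*y + 5 < 0 := by nlinarith
    refine ⟨?_, hy34⟩
    nlinarith [sq_nonneg (8*y - 5 - Real.sqrt 5)]
  · rintro ⟨h0, h1⟩
    have h0' : 0 < y := by nlinarith
    have h1' : y < 1 := by linarith
    have hq : 16*y^2 - 20*y + 5 < 0 := by nlinarith
    refine ⟨⟨h0', h1'⟩, ?_, by nlinarith⟩
    nlinarith [mul_pos (mul_pos h0' (by linarith : (0:ℝ) < 3 - 4*y)) (by linarith : (0:ℝ) < -(16*y^2 - 20*y + 5))]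

lemma set4 : {y ∈ Set.Ioo (0 : ℝ) 1 |
    logisticMap y < y ∧ y < logisticMap (logisticMap y)}
    = Set.Ioo (3/4) ((5 + Real.sqrt 5)/8) := by
  have h5 : Real.sqrt 5 ^ 2 = 5 := Real.sq_sqrt (by norm_num)
  have h3 := sqrt5_lt
  have h2 := sqrt5_gt
  ext y
  simp only [Set.mem_setOf_eq, Set.mem_Ioo, logisticMap]
  constructor
  · rintro ⟨⟨h0, h1⟩, ha, hb⟩
    have hy34 : 3/4 < y := by nlinarith
    have hq : 16*y^2 - 20*y + 5 < 0 := by nlinarith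
    refine ⟨hy34, ?_⟩
    nlinarith [sq_nonneg (8*y - 5 + Real.sqrt 5)]
  · rintro ⟨h0, h1⟩
    have h1' : y < 1 := by nlinarith
    have h0' : 0 < y := by linarith
    have hq : 16*y^2 - 20*y + 5 < 0 := by nlinarith
    refine ⟨⟨h0', h1'⟩, by nlinarith, ?_⟩
    nlinarith [mul_pos (mul_pos h0' (by linarith : (0:ℝ) < 4*y - 3)) (by linarith : (0:ℝ) < -(16*y^2 - 20*y + 5))]

lemma set5 : {y ∈ Set.Ioo (0 : ℝ) 1 |
    logisticMap y < logisticMap (logisticMap y) ∧ logisticMap (logisticMap y) < y}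
    = Set.Ioo ((5 + Real.sqrt 5)/8) 1 := by
  have h5 : Real.sqrt 5 ^ 2 = 5 := Real.sq_sqrt (by norm_num)
  have h3 := sqrt5_lt
  have h2 := sqrt5_gt
  ext y
  simp only [Set.mem_setOf_eq, Set.mem_Ioo, logisticMap]
  constructor
  · rintro ⟨⟨h0, h1⟩, ha, hb⟩
    refine ⟨?_, h1⟩
    -- from ha : f y < f f y with f y > 0, f y < 3/4, so y < 1/4 or y > 3/4
    have hu0 : 0 < 4*y*(1-y) := by nlinarith
    have hu34 : 4*y*(1-y) < 3/4 := by nlinarith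
    have hcase : y < 1/4 ∨ 3/4 < y := by
      rcases lt_or_ge y (1/4) with h | h
      · exact Or.inl h
      · right; nlinarith
    rcases hcase with hc | hc
    · -- then f f y < y fails: y(4y-3)(16y^2-20y+5) > 0 needed but 4y-3<0, quad>0
      exfalso
      have hqpos : 16*y^2 - 20*y + 5 > 0 := by nlinarith
      nlinarith [mul_pos (mul_pos h0 (by linarith : (0:ℝ) < 3 - 4*y)) hqpos]
    · have hqpos : 16*y^2 - 20*y + 5 > 0 := by nlinarith
      nlinarith [sq_nonneg (8*y - 5 - Real.sqrt 5)]
  · rintro ⟨h0, h1⟩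
    have h34 : 3/4 < y := by nlinarith
    have h0' : 0 < y := by linarith
    have hq : 16*y^2 - 20*y + 5 > 0 := by nlinarith
    have hu0 : 0 < 4*y*(1-y) := by nlinarith
    have hu34 : 4*y*(1-y) < 3/4 := by nlinarith
    refine ⟨⟨h0', h1⟩, ?_, ?_⟩
    · nlinarith [mul_pos hu0 (by linarith : (0:ℝ) < 3 - 4*(4*y*(1-y)))]
    · nlinarith [mul_pos (mul_pos h0' (by linarith : (0:ℝ) < 4*y - 3)) hq]

lemma set6 : {y ∈ Set.Ioo (0 : ℝ) 1 |
    logisticMap (logisticMap y) < logisticMap y ∧ logisticMap y < y} = ∅ := by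
  ext y
  simp only [Set.mem_setOf_eq, Set.mem_Ioo, Set.mem_empty_iff_false, iff_false, not_and]
  rintro ⟨h0, h1⟩ ha
  -- ha : f f y < f y needs f y > 3/4; but f y < y needs y > 3/4 hence f y < 3/4
  have h34 : 3/4 < y → 4*y*(1-y) < 3/4 := by intro h; nlinarith
  have hu0 : 0 < 4*y*(1-y) := by nlinarith
  intro hb
  simp only [logisticMap] at ha hb
  have hy34 : 3/4 < y := by nlinarith
  have hu34 := h34 hy34
  nlinarith [mul_pos hu0 (by linarith : (0:ℝ) < 3 - 4*(4*y*(1-y)))]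

lemma setIoo_int {a b : ℝ} (hab : a ≤ b) :
    (∫ y in Set.Ioo a b, logisticDensity y) = ∫ y in a..b, logisticDensity y := by
  rw [intervalIntegral.integral_of_le hab, MeasureTheory.integral_Ioc_eq_integral_Ioo]

/-- The five integrals of the invariant density `g(y) = 1/(π √(y(1-y)))` over the
ordinal-pattern intervals equal `1/3, 1/15, 4/15, 2/15, 1/5`; consequently, the
ordinal probabilities of the embedding-dimension-3 permutation patterns of the
logistic map `y ↦ 4y(1-y)` are `(1/3, 1/15, 4/15, 2/15, 1/5, 0)`. -/
theorem logistic_ordinal_probabilities :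
    (∫ y in (0 : ℝ)..(1 / 4), logisticDensity y) = 1 / 3 ∧
    (∫ y in (1 / 4 : ℝ)..((5 - Real.sqrt 5) / 8), logisticDensity y) = 1 / 15 ∧
    (∫ y in ((5 - Real.sqrt 5) / 8 : ℝ)..(3 / 4), logisticDensity y) = 4 / 15 ∧
    (∫ y in (3 / 4 : ℝ)..((5 + Real.sqrt 5) / 8), logisticDensity y) = 2 / 15 ∧
    (∫ y in ((5 + Real.sqrt 5) / 8 : ℝ)..1, logisticDensity y) = 1 / 5 ∧
    -- ordinal probabilities: the invariant measure of each ordinal-pattern set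
    (∫ y in {y ∈ Set.Ioo (0 : ℝ) 1 |
        y < logisticMap y ∧ logisticMap y < logisticMap (logisticMap y)},
      logisticDensity y) = 1 / 3 ∧
    (∫ y in {y ∈ Set.Ioo (0 : ℝ) 1 |
        y < logisticMap (logisticMap y) ∧ logisticMap (logisticMap y) < logisticMap y},
      logisticDensity y) = 1 / 15 ∧
    (∫ y in {y ∈ Set.Ioo (0 : ℝ) 1 |
        logisticMap (logisticMap y) < y ∧ y < logisticMap y},
      logisticDensity y) = 4 / 15 ∧
    (∫ y in {y ∈ Set.Ioo (0 : ℝ) 1 |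
        logisticMap y < y ∧ y < logisticMap (logisticMap y)},
      logisticDensity y) = 2 / 15 ∧
    (∫ y in {y ∈ Set.Ioo (0 : ℝ) 1 |
        logisticMap y < logisticMap (logisticMap y) ∧ logisticMap (logisticMap y) < y},
      logisticDensity y) = 1 / 5 ∧
    (∫ y in {y ∈ Set.Ioo (0 : ℝ) 1 |
        logisticMap (logisticMap y) < logisticMap y ∧ logisticMap y < y},
      logisticDensity y) = 0 := by
  have hlt := sqrt5_lt
  have hgt := sqrt5_gt
  refine ⟨int1, int2, int3, int4, int5, ?_, ?_, ?_, ?_, ?_, ?_⟩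
  · rw [set1, setIoo_int (by norm_num)]; exact int1
  · rw [set2, setIoo_int (by linarith)]; exact int2
  · rw [set3, setIoo_int (by linarith)]; exact int3
  · rw [set4, setIoo_int (by linarith)]; exact int4
  · rw [set5, setIoo_int (by linarith)]; exact int5
  · rw [set6]; simp
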